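/- arXiv:2409.06823 — 7 statements merged into one kernel-verified Lean document; each statement's English description precedes it below -/
import Mathlib

section
/- Let (X, Y) be a cotorsion pair in an abelian category M, let l : A → B be a monomorphism with cokernel in X, and let r : C → D be an epimorphism with kernel in Y. Then l has the left lifting property with respect to r: for any commutative square with l on the left and r on the right, there exists a diagonal morphism h : B → C making both triangles commute. -/
open CategoryTheory Limits

/-- `Ext1Zero X Y` expresses the vanishing of the Yoneda Ext group `Ext¹(X, Y)`:
every short exact sequence `0 ⟶ Y ⟶ E ⟶ X ⟶ 0` splits. -/
def Ext1Zero {M : Type*} [Category M] [Abelian M] (X Y : M) : Prop :=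
  ∀ (E : M) (i : Y ⟶ E) (p : E ⟶ X) (w : i ≫ p = 0),
    (ShortComplex.mk i p w).ShortExact → ∃ r : E ⟶ Y, i ≫ r = 𝟙 Y

/-- `(𝒳, 𝒴)` is a cotorsion pair: each class is the `Ext¹`-orthogonal of the other. -/
def IsCotorsionPair {M : Type*} [Category M] [Abelian M] (𝒳 𝒴 : Set M) : Prop :=
  (∀ A, A ∈ 𝒳 ↔ ∀ Y ∈ 𝒴, Ext1Zero A Y) ∧ (∀ B, B ∈ 𝒴 ↔ ∀ X ∈ 𝒳, Ext1Zero X B)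

/-- If `(𝒳, 𝒴)` is a cotorsion pair, `l` is a monomorphism with cokernel in `𝒳` and
`r` is an epimorphism with kernel in `𝒴`, then `l` has the left lifting property
with respect to `r`. -/
theorem cotorsionPair_lifting
    {M : Type*} [Category M] [Abelian M] (𝒳 𝒴 : Set M)
    (hcp : IsCotorsionPair 𝒳 𝒴)
    {A B C D : M} (l : A ⟶ B) (r : C ⟶ D)
    (hl : Mono l) (hlc : cokernel l ∈ 𝒳)
    (hr : Epi r) (hrk : kernel r ∈ 𝒴) :
    HasLiftingProperty l r := by
  haveI := hl
  haveI := hr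
  constructor
  intro f g sq
  -- the pullback `P = B ×_D C`
  set π : pullback g r ⟶ B := pullback.fst g r with hπdef
  set ψ : pullback g r ⟶ C := pullback.snd g r with hψdef
  have hπψ : π ≫ g = ψ ≫ r := pullback.condition
  haveI hπepi : Epi π := by dsimp [π]; infer_instance
  -- the comparison map `u : A ⟶ P`
  set u : A ⟶ pullback g r := pullback.lift l f sq.w.symm with hudef
  have huπ : u ≫ π = l := pullback.lift_fst _ _ _
  have huψ : u ≫ ψ = f := pullback.lift_snd _ _ _
  haveI humono : Mono u := by
    have : Mono (u ≫ π) := by rw [huπ]; infer_instance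
    exact mono_of_mono u π
  -- the inclusion of `ker r` into `P`
  set κ : kernel r ⟶ pullback g r := pullback.lift 0 (kernel.ι r) (by simp) with hκdef
  have hκπ : κ ≫ π = 0 := pullback.lift_fst _ _ _
  have hκψ : κ ≫ ψ = kernel.ι r := pullback.lift_snd _ _ _
  haveI hκmono : Mono κ := by
    have : Mono (κ ≫ ψ) := by rw [hκψ]; infer_instance
    exact mono_of_mono κ ψ
  -- `G = P/A` and the induced map `q : G ⟶ X = coker l`
  set c : pullback g r ⟶ cokernel u := cokernel.π u with hcdef
  have huc : u ≫ c = 0 := cokernel.condition u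
  have hup : u ≫ π ≫ cokernel.π l = 0 := by
    rw [← Category.assoc, huπ, cokernel.condition]
  set q : cokernel u ⟶ cokernel l := cokernel.desc u (π ≫ cokernel.π l) hup with hqdef
  have hcq : c ≫ q = π ≫ cokernel.π l := cokernel.π_desc _ _ _
  -- `u` is the kernel of `c`
  have hukc : IsLimit (KernelFork.ofι u (cokernel.condition u)) :=
    Abelian.monoIsKernelOfCokernel (CokernelCofork.ofπ (cokernel.π u) (cokernel.condition u))
      (cokernelIsCokernel u)
  -- `κ ≫ c` is a mono
  have hw : (κ ≫ c) ≫ q = 0 := by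
    rw [Category.assoc, hcq, ← Category.assoc, hκπ, zero_comp]
  haveI hmono : Mono (κ ≫ c) := by
    apply Preadditive.mono_of_cancel_zero
    intro T t ht
    obtain ⟨v, hv⟩ := KernelFork.IsLimit.lift' hukc (t ≫ κ)
      (by rw [Category.assoc]; exact ht)
    have hv' : v ≫ u = t ≫ κ := hv
    have hvl : v ≫ l = 0 := by
      rw [← huπ, ← Category.assoc, hv', Category.assoc, hκπ, comp_zero]
    have hv0 : v = 0 := by
      rw [← cancel_mono l, hvl, zero_comp]
    have : t ≫ κ = 0 := by rw [← hv', hv0, zero_comp]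
    rw [← cancel_mono κ, this, zero_comp]
  -- `ker π` factors through `κ`
  have hkι : (kernel.ι π ≫ ψ) ≫ r = 0 := by
    rw [Category.assoc, ← hπψ, ← Category.assoc, kernel.condition, zero_comp]
  set e : kernel π ⟶ kernel r := kernel.lift r (kernel.ι π ≫ ψ) hkι with hedef
  have heι : e ≫ kernel.ι r = kernel.ι π ≫ ψ := kernel.lift_ι _ _ _
  have heκ : e ≫ κ = kernel.ι π := by
    apply pullback.hom_ext
    · rw [Category.assoc, hκπ, comp_zero, kernel.condition]
    · rw [Category.assoc, hκψ, heι]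
  -- `q` is the cokernel of `κ ≫ c`, so we have a short exact sequence
  haveI hepi : Epi q := by
    have : Epi (c ≫ q) := by rw [hcq]; exact epi_comp _ _
    exact epi_of_epi c q
  have key : ∀ {T : M} (t : cokernel u ⟶ T), (κ ≫ c) ≫ t = 0 →
      kernel.ι π ≫ (c ≫ t) = 0 := by
    intro T t ht
    rw [← heκ, Category.assoc, ← Category.assoc κ, ht, comp_zero]
  have hcoker : IsColimit (CokernelCofork.ofπ q hw) := by
    refine CokernelCofork.IsColimit.ofπ q hw
      (fun {T} t ht => cokernel.desc l (Abelian.epiDesc π (c ≫ t) (key t ht)) ?_)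
      (fun {T} t ht => ?_) (fun {T} t ht m hm => ?_)
    · rw [← huπ, Category.assoc, Abelian.comp_epiDesc, ← Category.assoc, huc, zero_comp]
    · rw [← cancel_epi c, ← Category.assoc, hcq, Category.assoc,
        cokernel.π_desc, Abelian.comp_epiDesc]
    · rw [← cancel_epi q, hm]
      rw [← cancel_epi c, ← Category.assoc, hcq, Category.assoc,
        cokernel.π_desc, Abelian.comp_epiDesc]
  have hses : (ShortComplex.mk (κ ≫ c) q hw).ShortExact :=
    { exact := (ShortComplex.mk (κ ≫ c) q hw).exact_of_g_is_cokernel hcoker }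
  -- use the cotorsion-pair hypothesis to split the sequence
  have hext : Ext1Zero (cokernel l) (kernel r) := (hcp.1 _).mp hlc _ hrk
  obtain ⟨t, ht⟩ := hext (cokernel u) (κ ≫ c) q hw hses
  -- construct the lift
  have hκκ : κ ≫ (c ≫ t) ≫ κ = κ := by
    simp only [← Category.assoc]
    rw [ht, Category.id_comp]
  have hz0 : kernel.ι π ≫ (𝟙 (pullback g r) - (c ≫ t) ≫ κ) = 0 := by
    rw [Preadditive.comp_sub, Category.comp_id, ← heκ, Category.assoc, hκκ, sub_self]
  set s : B ⟶ pullback g r := Abelian.epiDesc π _ hz0 with hsdef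
  have hs : π ≫ s = 𝟙 (pullback g r) - (c ≫ t) ≫ κ := Abelian.comp_epiDesc _ _ _
  have hsπ : s ≫ π = 𝟙 B := by
    rw [← cancel_epi π, ← Category.assoc, hs, Preadditive.sub_comp, Category.id_comp,
      Category.assoc, Category.assoc, hκπ, comp_zero, comp_zero, sub_zero, Category.comp_id]
  have hls : l ≫ s = u := by
    rw [← huπ, Category.assoc, hs, Preadditive.comp_sub, Category.comp_id,
      ← Category.assoc u, ← Category.assoc u, huc, zero_comp, zero_comp, sub_zero]
  exact ⟨⟨⟨s ≫ ψ, by rw [← Category.assoc, hls, huψ],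
    by rw [Category.assoc, ← hπψ, ← Category.assoc, hsπ, Category.id_comp]⟩⟩⟩
end

section
/- Let (X, Y) be a cotorsion pair in an abelian category M such that Y is cogenerating (every object embeds into some object of Y). If (f_i : W_i → Z_i)_{i ∈ I} is a family of monomorphisms with cokernel in X such that the coproducts of the W_i and of the Z_i exist, then the coproduct morphism ∐ f_i : ∐ W_i → ∐ Z_i is a monomorphism with cokernel in X. -/
open CategoryTheory Limits

section Aux

variable {M : Type*} [Category M] [Abelian M]

/-- Pulling back a short exact sequence `0 → Y → E → C → 0` along `h : X ⟶ C`. -/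
lemma aux_pullback_shortExact {Y E C X : M} (i : Y ⟶ E) (p : E ⟶ C) (w : i ≫ p = 0)
    (hS : (ShortComplex.mk i p w).ShortExact) (h : X ⟶ C) :
    (ShortComplex.mk (pullback.lift i 0 (by simp [w]) : Y ⟶ pullback p h)
      (pullback.snd p h) (pullback.lift_snd _ _ _)).ShortExact := by
  haveI := hS.mono_f
  haveI := hS.epi_g
  have hw : i ≫ p = 0 ≫ h := by simp [w]
  haveI : Mono (pullback.lift i 0 hw : Y ⟶ pullback p h) :=
    mono_of_mono_fac (pullback.lift_fst i 0 hw)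
  refine { exact := ?_ }
  apply ShortComplex.exact_of_f_is_kernel
  have fac : ∀ {A : M} (a : A ⟶ pullback p h) (ha : a ≫ pullback.snd p h = 0),
      hS.exact.lift (a ≫ pullback.fst p h)
        (by rw [Category.assoc, pullback.condition, ← Category.assoc, ha]; all_goals simp) ≫
        pullback.lift i 0 hw = a := by
    intro A a ha
    apply pullback.hom_ext
    · rw [Category.assoc, pullback.lift_fst]; exact hS.exact.lift_f _ _
    · rw [Category.assoc, pullback.lift_snd, comp_zero, ha]
  refine KernelFork.IsLimit.ofι _ _ (fun {A} a ha => hS.exact.lift (a ≫ pullback.fst p h)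
      (by rw [Category.assoc, pullback.condition, ← Category.assoc, ha]; all_goals simp))
    (fun {A} a ha => fac a ha) (fun {A} a ha b hb => ?_)
  rw [← cancel_mono (pullback.lift i 0 hw : Y ⟶ pullback p h), fac a ha]
  exact hb

/-- Pushing out a short exact sequence `0 → W → Z → X → 0` along `φ : W ⟶ Y`. -/
lemma aux_pushout_shortExact {W Z X Y : M} (f : W ⟶ Z) (π : Z ⟶ X) (w : f ≫ π = 0)
    (hS : (ShortComplex.mk f π w).ShortExact) (φ : W ⟶ Y) :
    (ShortComplex.mk (pushout.inr f φ : Y ⟶ pushout f φ)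
      (pushout.desc π 0 (by simp [w])) (pushout.inr_desc _ _ _)).ShortExact := by
  haveI := hS.mono_f
  haveI := hS.epi_g
  have hw : f ≫ π = φ ≫ 0 := by simp [w]
  haveI : Epi (pushout.desc π 0 hw : pushout f φ ⟶ X) :=
    epi_of_epi_fac (pushout.inl_desc π 0 hw)
  refine { exact := ?_ }
  apply ShortComplex.exact_of_g_is_cokernel
  have fac : ∀ {A : M} (a : pushout f φ ⟶ A) (ha : pushout.inr f φ ≫ a = 0),
      pushout.desc π 0 hw ≫ hS.exact.desc (pushout.inl f φ ≫ a)
        (by rw [← Category.assoc, pushout.condition, Category.assoc, ha]; all_goals simp) = a := by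
    intro A a ha
    apply pushout.hom_ext
    · rw [← Category.assoc, pushout.inl_desc]; exact hS.exact.g_desc _ _
    · rw [← Category.assoc, pushout.inr_desc, zero_comp, ha]
  refine CokernelCofork.IsColimit.ofπ _ _ (fun {A} a ha => hS.exact.desc (pushout.inl f φ ≫ a)
      (by rw [← Category.assoc, pushout.condition, Category.assoc, ha]; all_goals simp))
    (fun {A} a ha => fac a ha) (fun {A} a ha b hb => ?_)
  rw [← cancel_epi (pushout.desc π 0 hw : pushout f φ ⟶ X), fac a ha]
  exact hb

/-- Extension lemma: given a short exact `0 → W → Z → X → 0` with `Ext¹(X,Y) = 0`,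
any map `W ⟶ Y` extends along `f`. -/
lemma aux_extend {W Z X Y : M} (f : W ⟶ Z) (π : Z ⟶ X) (w : f ≫ π = 0)
    (hS : (ShortComplex.mk f π w).ShortExact) (hext : Ext1Zero X Y) (φ : W ⟶ Y) :
    ∃ ψ : Z ⟶ Y, f ≫ ψ = φ := by
  obtain ⟨r, hr⟩ := hext (pushout f φ) (pushout.inr f φ) (pushout.desc π 0 (by simp [w]))
    (pushout.inr_desc _ _ _) (aux_pushout_shortExact f π w hS φ)
  refine ⟨pushout.inl f φ ≫ r, ?_⟩
  rw [← Category.assoc, pushout.condition, Category.assoc, hr, Category.comp_id]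

end Aux

/-- Let `(𝒳, 𝒴)` be a cotorsion pair with `𝒴` cogenerating (every object embeds into
an object of `𝒴`).  If `(f i : W i ⟶ Z i)` is a family of monomorphisms with
cokernels in `𝒳` such that the coproducts `∐ W` and `∐ Z` exist, then
`∐ f : ∐ W ⟶ ∐ Z` is a monomorphism with cokernel in `𝒳`. -/
theorem coproduct_of_X_monos
    {M : Type*} [Category M] [Abelian M] (𝒳 𝒴 : Set M)
    (hcp : IsCotorsionPair 𝒳 𝒴)
    (hcogen : ∀ A : M, ∃ Y ∈ 𝒴, ∃ m : A ⟶ Y, Mono m)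
    {ι : Type*} (W Z : ι → M) (f : ∀ i, W i ⟶ Z i)
    [HasCoproduct W] [HasCoproduct Z]
    (hmono : ∀ i, Mono (f i)) (hcok : ∀ i, cokernel (f i) ∈ 𝒳) :
    Mono (Limits.Sigma.map f) ∧ cokernel (Limits.Sigma.map f) ∈ 𝒳 := by
  -- the short exact sequences `0 → W i → Z i → cokernel (f i) → 0`
  have hses : ∀ i, (ShortComplex.mk (f i) (cokernel.π (f i))
      (cokernel.condition (f i))).ShortExact := fun i =>
    { exact := ShortComplex.exact_of_g_is_cokernel _ (cokernelIsCokernel (f i))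
      mono_f := hmono i }
  have hext : ∀ i, ∀ Y ∈ 𝒴, Ext1Zero (cokernel (f i)) Y := fun i =>
    (hcp.1 _).1 (hcok i)
  constructor
  · -- monomorphism part
    obtain ⟨Y₀, hY₀, m, hm⟩ := hcogen (∐ W)
    choose g hg using fun i =>
      aux_extend (f i) (cokernel.π (f i)) (cokernel.condition (f i)) (hses i)
        (hext i Y₀ hY₀) (Sigma.ι W i ≫ m)
    have hfac : Limits.Sigma.map f ≫ Sigma.desc g = m := by
      ext i
      simp [hg i]
    exact mono_of_mono_fac hfac
  · -- cokernel part
    rw [hcp.1]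
    intro Y hY E iY pE w hSE
    -- for each `i`, pull back the extension along `cokernel (f i) ⟶ cokernel (Limits.Sigma.map f)`
    set c : ∀ i, cokernel (f i) ⟶ cokernel (Limits.Sigma.map f) := fun i =>
      cokernel.map (f i) (Limits.Sigma.map f) (Sigma.ι W i) (Sigma.ι Z i) (by simp) with hc
    have hpull := fun i => aux_pullback_shortExact iY pE w hSE (c i)
    have hsec : ∀ i, ∃ t : cokernel (f i) ⟶ E, t ≫ pE = c i := by
      intro i
      obtain ⟨r, hr⟩ := hext i Y hY (pullback pE (c i))
        (pullback.lift iY 0 (by simp [w])) (pullback.snd pE (c i)) (pullback.lift_snd _ _ _) (hpull i)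
      have spl := ShortComplex.Splitting.ofExactOfRetraction _ (hpull i).exact r hr
        (hpull i).epi_g
      refine ⟨spl.s ≫ pullback.fst pE (c i), ?_⟩
      rw [Category.assoc, pullback.condition, ← Category.assoc]
      have := spl.s_g
      dsimp at this
      rw [this, Category.id_comp]
    choose t ht using hsec
    -- assemble a section of `pE`
    have hgg0 : Limits.Sigma.map f ≫ Sigma.desc (fun i => cokernel.π (f i) ≫ t i) = 0 := by
      ext i
      simp
    set σ : cokernel (Limits.Sigma.map f) ⟶ E :=
      cokernel.desc (Limits.Sigma.map f) (Sigma.desc (fun i => cokernel.π (f i) ≫ t i)) hgg0 with hσ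
    have hσp : σ ≫ pE = 𝟙 _ := by
      rw [← cancel_epi (cokernel.π (Limits.Sigma.map f)), Category.comp_id, ← Category.assoc]
      rw [hσ, cokernel.π_desc]
      ext i
      simp [ht i, hc]
    have spl := ShortComplex.Splitting.ofExactOfSection _ hSE.exact σ hσp hSE.mono_f
    exact ⟨spl.r, spl.f_r⟩
end

section
/- Let M be a cocomplete abelian category and Y a class of objects of M. If an object M of M admits a transfinite filtration (a well-ordered continuous direct system starting at 0 with successor maps monomorphisms and all successive quotients in the left Ext^1-orthogonal of Y) by objects of ⊥Y, then M itself belongs to ⊥Y, where ⊥Y = {M : Ext^1(M, Y) = 0 for all Y in Y}. -/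
open CategoryTheory Limits

variable {M : Type*} [Category M] [Abelian M]
variable {J : Type*} [LinearOrder J]

/-- The canonical cocone on the restriction of a `J`-indexed direct system `F` to the
elements `< x`, with apex `F.obj x`; the filtration is *continuous* at a limit element
`x` precisely when this cocone is a colimit cocone. -/
@[simps]
def coconeAt (F : J ⥤ M) (x : J) :
    Cocone ((Monotone.functor (f := fun y : Set.Iio x => (y : J))
      (fun _ _ h => h)) ⋙ F) where
  pt := F.obj x
  ι :=
    { app := fun y => F.map (homOfLE (le_of_lt y.2))
      naturality := by
        intro a b f
        dsimp
        rw [Category.comp_id, ← F.map_comp]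
        congr 1 }

/-- The key extension step used in the proof of the Eklof lemma: a partial section
of `p` defined on `X₁` extends along a monomorphism `f : X₁ ⟶ X₂` whose cokernel
has vanishing `Ext¹` against `Y`. -/
lemma ext_step {Y E T X₁ X₂ : M} (i : Y ⟶ E) (p : E ⟶ T) (w : i ≫ p = 0)
    (hSE : (ShortComplex.mk i p w).ShortExact)
    (f : X₁ ⟶ X₂) [hf : Mono f]
    (hext : Ext1Zero (cokernel f) Y)
    (g : X₂ ⟶ T) (s : X₁ ⟶ E) (hs : s ≫ p = f ≫ g) :
    ∃ s' : X₂ ⟶ E, f ≫ s' = s ∧ s' ≫ p = g := by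
  haveI : Mono i := hSE.mono_f
  haveI : Epi p := hSE.epi_g
  set q : pullback p g ⟶ X₂ := pullback.snd p g with hq
  have hk0 : i ≫ p = (0 : Y ⟶ X₂) ≫ g := by simp [w]
  set k : Y ⟶ pullback p g := pullback.lift i 0 hk0 with hk
  set u : X₁ ⟶ pullback p g := pullback.lift s f hs with hu
  have hkq : k ≫ q = 0 := pullback.lift_snd _ _ _
  have hkfst : k ≫ pullback.fst p g = i := pullback.lift_fst _ _ _
  have huq : u ≫ q = f := pullback.lift_snd _ _ _
  have hufst : u ≫ pullback.fst p g = s := pullback.lift_fst _ _ _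
  haveI : Mono k := mono_of_mono_fac hkfst
  haveI : Mono u := mono_of_mono_fac huq
  haveI : Epi q := CategoryTheory.Abelian.epi_pullback_of_epi_f p g
  -- k is a kernel of q
  have hKlim : IsLimit (KernelFork.ofι k hkq) := by
    refine KernelFork.IsLimit.ofι' k hkq (fun {A} m hm => ?_)
    have hmp : (m ≫ pullback.fst p g) ≫ p = 0 := by
      rw [Category.assoc, pullback.condition, ← Category.assoc, hm, zero_comp]
    refine ⟨hSE.exact.lift (m ≫ pullback.fst p g) hmp, ?_⟩
    apply pullback.hom_ext
    · rw [Category.assoc, hkfst]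
      exact hSE.exact.lift_f _ _
    · rw [Category.assoc]
      show _ ≫ (k ≫ q) = m ≫ q
      rw [hkq, comp_zero, hm]
  have hS1exact : (ShortComplex.mk k q hkq).Exact :=
    ShortComplex.exact_of_f_is_kernel _ hKlim
  have hS1 : (ShortComplex.mk k q hkq).ShortExact :=
    { exact := hS1exact }
  -- the cokernel of u
  set π : pullback p g ⟶ cokernel u := cokernel.π u with hπ
  have huπ : u ≫ π = 0 := cokernel.condition u
  have hqbar0 : u ≫ (q ≫ cokernel.π f) = 0 := by
    rw [← Category.assoc, huq, cokernel.condition]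
  set qbar : cokernel u ⟶ cokernel f := cokernel.desc u (q ≫ cokernel.π f) hqbar0 with hqb
  have hπqbar : π ≫ qbar = q ≫ cokernel.π f := cokernel.π_desc _ _ _
  have w2 : (k ≫ π) ≫ qbar = 0 := by
    rw [Category.assoc, hπqbar, ← Category.assoc, hkq, zero_comp]
  have hEuπ : (ShortComplex.mk u π huπ).Exact :=
    ShortComplex.exact_of_g_is_cokernel _ (cokernelIsCokernel u)
  haveI : Mono (k ≫ π) := by
    apply Preadditive.mono_of_cancel_zero
    intro A z hz
    have hzk : (z ≫ k) ≫ π = 0 := by rw [Category.assoc]; exact hz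
    have hl := hEuπ.lift_f (z ≫ k) hzk
    have : hEuπ.lift (z ≫ k) hzk ≫ f = 0 := by
      rw [← huq, ← Category.assoc, hl, Category.assoc, hkq, comp_zero]
    have hl0 : hEuπ.lift (z ≫ k) hzk = 0 := zero_of_comp_mono f this
    rw [hl0, zero_comp] at hl
    rw [← cancel_mono k, zero_comp, hl]
  haveI : Epi qbar := by
    haveI : Epi (π ≫ qbar) := by rw [hπqbar]; exact epi_comp _ _
    exact epi_of_epi π qbar
  have hS2exact : (ShortComplex.mk (k ≫ π) qbar w2).Exact := by
    rw [ShortComplex.exact_iff_exact_up_to_refinements]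
    intro A z hz
    obtain ⟨A₁, π₁, hπ₁, z₁, hz₁⟩ := surjective_up_to_refinements_of_epi π z
    have hz₁q : (z₁ ≫ q) ≫ cokernel.π f = 0 := by
      rw [Category.assoc, ← hπqbar, ← Category.assoc, ← hz₁, Category.assoc, hz, comp_zero]
    have hEf : (ShortComplex.mk f (cokernel.π f) (cokernel.condition f)).Exact :=
      ShortComplex.exact_of_g_is_cokernel _ (cokernelIsCokernel f)
    obtain ⟨A₂, π₂, hπ₂, w₁, hw₁⟩ := hEf.exact_up_to_refinements (z₁ ≫ q) hz₁q
    have hz₂q : ((π₂ ≫ z₁) - w₁ ≫ u) ≫ q = 0 := by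
      rw [Preadditive.sub_comp, Category.assoc, Category.assoc, huq]
      rw [← Category.assoc, ← hw₁]
      simp
    obtain ⟨A₃, π₃, hπ₃, y, hy⟩ := hS1exact.exact_up_to_refinements _ hz₂q
    refine ⟨A₃, π₃ ≫ π₂ ≫ π₁, epi_comp _ _, y, ?_⟩
    have : π₃ ≫ ((π₂ ≫ z₁) - w₁ ≫ u) = y ≫ k := hy
    calc (π₃ ≫ π₂ ≫ π₁) ≫ z = π₃ ≫ π₂ ≫ (π₁ ≫ z) := by simp [Category.assoc]
      _ = π₃ ≫ π₂ ≫ z₁ ≫ π := by rw [hz₁]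
      _ = (π₃ ≫ ((π₂ ≫ z₁) - w₁ ≫ u)) ≫ π + ((π₃ ≫ w₁) ≫ u) ≫ π := by
          simp [Preadditive.sub_comp, Preadditive.comp_sub, Category.assoc]
      _ = y ≫ (k ≫ π) := by rw [this]; simp [Category.assoc, huπ]
  have hS2 : (ShortComplex.mk (k ≫ π) qbar w2).ShortExact := { exact := hS2exact }
  obtain ⟨ρ, hρ⟩ := hext (cokernel u) (k ≫ π) qbar w2 hS2
  set e : pullback p g ⟶ pullback p g := 𝟙 _ - π ≫ ρ ≫ k with he
  have hke : k ≫ e = 0 := by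
    rw [he, Preadditive.comp_sub, Category.comp_id]
    rw [show k ≫ π ≫ ρ ≫ k = ((k ≫ π) ≫ ρ) ≫ k by simp [Category.assoc], hρ,
      Category.id_comp, sub_self]
  haveI : Epi (ShortComplex.mk k q hkq).g := hS1.epi_g
  set t : X₂ ⟶ pullback p g := hS1exact.desc e hke with ht
  have hqt : q ≫ t = e := hS1exact.g_desc e hke
  have hft : f ≫ t = u := by
    rw [← huq, Category.assoc, hqt, he, Preadditive.comp_sub, Category.comp_id,
      show u ≫ π ≫ ρ ≫ k = (u ≫ π) ≫ ρ ≫ k by simp [Category.assoc], huπ, zero_comp, sub_zero]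
  have htq : t ≫ q = 𝟙 X₂ := by
    rw [← cancel_epi q, ← Category.assoc, hqt, Category.comp_id, he, Preadditive.sub_comp,
      Category.id_comp, show (π ≫ ρ ≫ k) ≫ q = π ≫ ρ ≫ (k ≫ q) by simp [Category.assoc],
      hkq, comp_zero, comp_zero, sub_zero]
  refine ⟨t ≫ pullback.fst p g, ?_, ?_⟩
  · rw [← Category.assoc, hft, hufst]
  · rw [Category.assoc, pullback.condition, ← Category.assoc, htq, Category.id_comp]

/-- **The Eklof Lemma.**  Let `M` be a cocomplete abelian category and `𝒴` a class of
objects of `M`.  If an object admits a transfinite filtration — a well-ordered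
continuous direct system `F`, starting at `0`, whose successor maps are monomorphisms
with cokernels in `⊥𝒴 = {A | Ext¹(A, Y) = 0 for all Y ∈ 𝒴}` — then the top of the
filtration itself belongs to `⊥𝒴`. -/
theorem eklof_lemma [HasColimits M]
    [SuccOrder J] [WellFoundedLT J] [OrderBot J] [OrderTop J]
    (𝒴 : Set M) (F : J ⥤ M)
    -- the filtration starts at `0`
    (h0 : IsZero (F.obj ⊥))
    -- the successor maps are monomorphisms ...
    (hmono : ∀ x : J, ¬IsMax x → Mono (F.map (homOfLE (Order.le_succ x))))
    -- ... whose cokernels (the successive quotients) belong to `⊥𝒴`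
    (hquot : ∀ x : J, ¬IsMax x →
      ∀ Y ∈ 𝒴, Ext1Zero (cokernel (F.map (homOfLE (Order.le_succ x)))) Y)
    -- the system is continuous at limit elements
    (hcont : ∀ x : J, Order.IsSuccLimit x → Nonempty (IsColimit (coconeAt F x))) :
    ∀ Y ∈ 𝒴, Ext1Zero (F.obj (⊤ : J)) Y := by
  intro Y hY E i p w hSE
  classical
  obtain ⟨s, hs⟩ : ∃ s : F.obj (⊤ : J) ⟶ E, s ≫ p = 𝟙 (F.obj (⊤ : J)) := by
    let α := {a : J × (∀ y : J, F.obj y ⟶ E) //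
      (∀ y, y ≤ a.1 → a.2 y ≫ p = F.map (homOfLE le_top)) ∧
      (∀ (y z : J) (h : y ≤ z), z ≤ a.1 → F.map (homOfLE h) ≫ a.2 z = a.2 y)}
    let rel : α → α → Prop := fun a b => a.1.1 ≤ b.1.1 ∧ ∀ y, y ≤ a.1.1 → b.1.2 y = a.1.2 y
    have htrans : ∀ {a b c : α}, rel a b → rel b c → rel a c := by
      rintro a b c ⟨h1, h2⟩ ⟨h3, h4⟩
      exact ⟨h1.trans h3, fun y hy => (h4 y (hy.trans h1)).trans (h2 y hy)⟩
    have hchains : ∀ c, IsChain rel c → ∃ ub, ∀ a ∈ c, rel a ub := by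
      intro c hc
      by_cases hne : c.Nonempty
      · obtain ⟨a₀, ha₀⟩ := hne
        set U : Set J := {j | ∀ a ∈ c, a.1.1 ≤ j} with hU
        have hUne : U.Nonempty := ⟨⊤, fun a _ => le_top⟩
        set x := (wellFounded_lt (α := J)).min U hUne with hx
        have hxU : x ∈ U := WellFounded.min_mem _ _ _
        have hxmin : ∀ j ∈ U, ¬ j < x := fun j hj =>
          (wellFounded_lt (α := J)).not_lt_min U hj
        by_cases hattain : ∃ a ∈ c, x ≤ a.1.1
        · obtain ⟨a, hac, hax⟩ := hattain
          refine ⟨a, fun b hbc => ?_⟩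
          have hb_le : b.1.1 ≤ a.1.1 := le_trans (hxU b hbc) hax
          by_cases hba : b = a
          · subst hba; exact ⟨le_rfl, fun _ _ => rfl⟩
          · rcases hc hbc hac hba with h | h
            · exact h
            · exact ⟨hb_le, fun y hy => (h.2 y (hy.trans hb_le)).symm⟩
        · push_neg at hattain
          have hlt : ∀ a ∈ c, a.1.1 < x := hattain
          -- x is a limit
          have hxlim : Order.IsSuccLimit x := by
            constructor
            · intro hmin
              exact absurd (hmin (hlt a₀ ha₀).le) (not_le.mpr (hlt a₀ ha₀))
            · intro b hb
              have hbU : b ∉ U := fun hbU => hxmin b hbU hb.lt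
              have : ∃ a ∈ c, ¬ a.1.1 ≤ b := by
                by_contra hcon; push_neg at hcon; exact hbU hcon
              obtain ⟨a, hac, hba⟩ := this
              exact hb.2 (not_le.mp hba) (hlt a hac)
          obtain ⟨hcol⟩ := hcont x hxlim
          have key : ∀ y : J, y < x → ∃ a, a ∈ c ∧ y ≤ a.1.1 := by
            intro y hy
            by_contra hcon; push_neg at hcon
            exact hxmin y (fun a ha => (hcon a ha).le) hy
          have agree : ∀ a, a ∈ c → ∀ b, b ∈ c → ∀ y, y ≤ a.1.1 → y ≤ b.1.1 →
              a.1.2 y = b.1.2 y := by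
            intro a ha b hb y hya hyb
            by_cases hab : a = b
            · subst hab; rfl
            · rcases hc ha hb hab with h | h
              · exact (h.2 y hya).symm
              · exact h.2 y hyb
          let σ : ∀ y : J, y < x → (F.obj y ⟶ E) := fun y hy => (key y hy).choose.1.2 y
          have σ_spec : ∀ y (hy : y < x),
              (key y hy).choose ∈ c ∧ y ≤ (key y hy).choose.1.1 :=
            fun y hy => (key y hy).choose_spec
          have σ_eq : ∀ a, a ∈ c → ∀ y (hy : y < x), y ≤ a.1.1 → σ y hy = a.1.2 y := by
            intro a ha y hy hya
            exact agree _ (σ_spec y hy).1 a ha y (σ_spec y hy).2 hya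
          have σ_p : ∀ y (hy : y < x), σ y hy ≫ p = F.map (homOfLE le_top) := by
            intro y hy
            exact (key y hy).choose.2.1 y (σ_spec y hy).2
          have σ_compat : ∀ (y z : J) (h : y ≤ z) (hz : z < x),
              F.map (homOfLE h) ≫ σ z hz = σ y (lt_of_le_of_lt h hz) := by
            intro y z h hz
            have ha := σ_spec z hz
            rw [σ_eq _ ha.1 z hz ha.2, σ_eq _ ha.1 y (lt_of_le_of_lt h hz) (h.trans ha.2)]
            exact (key z hz).choose.2.2 y z h ha.2
          let K : Cocone ((Monotone.functor (f := fun y : Set.Iio x => (y : J))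
              (fun _ _ h => h)) ⋙ F) :=
            { pt := E
              ι :=
                { app := fun y => σ y.1 y.2
                  naturality := by
                    intro a b f
                    dsimp
                    refine Eq.trans ?_ (Category.comp_id _).symm
                    exact σ_compat a.1 b.1 (leOfHom f) b.2 } }
          have hfac : ∀ y : Set.Iio x,
              F.map (homOfLE (le_of_lt y.2)) ≫ hcol.desc K = σ y.1 y.2 :=
            fun y => hcol.fac K y
          have hsxp : hcol.desc K ≫ p = F.map (homOfLE le_top) := by
            apply hcol.hom_ext
            intro y
            rw [coconeAt_ι_app]; exact (Category.assoc _ _ _).symm.trans ((congrArg (· ≫ p) (hfac y)).trans ((σ_p y.1 y.2).trans (F.map_comp (homOfLE (le_of_lt y.2)) (homOfLE le_top))))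
          let sfun : ∀ y : J, F.obj y ⟶ E := fun y =>
            if h : y < x then σ y h
            else if h' : y = x then eqToHom (show F.obj y = F.obj x by rw [h']) ≫ hcol.desc K else 0
          have hsf_lt : ∀ y (h : y < x), sfun y = σ y h := fun y h => dif_pos h
          have hsf_x : sfun x = hcol.desc K := by simp [sfun]; exact Category.id_comp _
          refine ⟨⟨(x, sfun), ?_, ?_⟩, ?_⟩
          · intro y hy
            show sfun y ≫ p = F.map (homOfLE le_top)
            rcases lt_or_eq_of_le (show y ≤ x from hy) with h | h
            · rw [hsf_lt y h]; exact σ_p y h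
            · subst h
              rw [hsf_x]; exact hsxp
          · intro y z h hz
            show F.map (homOfLE h) ≫ sfun z = sfun y
            rcases lt_or_eq_of_le (show z ≤ x from hz) with hzx | hzx
            · have hyx : y < x := lt_of_le_of_lt h hzx
              rw [hsf_lt z hzx, hsf_lt y hyx]
              exact σ_compat y z h hzx
            · subst hzx
              rcases lt_or_eq_of_le (show y ≤ x from h) with hyx | hyx
              · rw [hsf_x, hsf_lt y hyx]
                exact hfac ⟨y, hyx⟩
              · subst hyx
                rw [hsf_x, show homOfLE h = 𝟙 x from rfl, F.map_id]; exact Category.id_comp _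
          · intro a ha
            refine ⟨(hlt a ha).le, fun y hy => ?_⟩
            show sfun y = a.1.2 y
            rw [hsf_lt y (lt_of_le_of_lt hy (hlt a ha))]
            exact σ_eq a ha y (lt_of_le_of_lt hy (hlt a ha)) hy
      · refine ⟨⟨(⊥, fun _ => 0), ?_, ?_⟩, fun a ha => absurd ⟨a, ha⟩ hne⟩
        · intro y hy
          have hyb : y = ⊥ := le_bot_iff.mp hy
          subst hyb
          exact h0.eq_of_src _ _
        · intro y z h hz
          have hz' : z = ⊥ := le_bot_iff.mp hz
          have hy' : y = ⊥ := le_bot_iff.mp (h.trans hz)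
          subst hz'; subst hy'
          exact h0.eq_of_src _ _
    obtain ⟨m, hm⟩ := exists_maximal_of_chains_bounded hchains htrans
    have hmtop : m.1.1 = ⊤ := by
      by_contra hnetop
      have hnmax : ¬IsMax m.1.1 := fun h => hnetop h.eq_top
      haveI := hmono m.1.1 hnmax
      have hlt : m.1.1 < Order.succ m.1.1 := Order.lt_succ_of_not_isMax hnmax
      obtain ⟨s', hs'1, hs'2⟩ := ext_step i p w hSE (F.map (homOfLE (Order.le_succ m.1.1)))
        (hquot m.1.1 hnmax Y hY) (F.map (homOfLE (le_top)))
        (m.1.2 m.1.1) (by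
          rw [m.2.1 m.1.1 le_rfl, ← F.map_comp, homOfLE_comp])
      let bfun : ∀ y : J, F.obj y ⟶ E := fun y =>
        if h : y = Order.succ m.1.1 then eqToHom (by rw [h]) ≫ s' else m.1.2 y
      have hbx : bfun (Order.succ m.1.1) = s' := by simp [bfun]
      have hble : ∀ y, y ≤ m.1.1 → bfun y = m.1.2 y := by
        intro y hy
        have : y ≠ Order.succ m.1.1 := ne_of_lt (lt_of_le_of_lt hy hlt)
        simp [bfun, this]
      have hb : (∀ y, y ≤ Order.succ m.1.1 → bfun y ≫ p = F.map (homOfLE le_top)) ∧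
          (∀ (y z : J) (h : y ≤ z), z ≤ Order.succ m.1.1 →
            F.map (homOfLE h) ≫ bfun z = bfun y) := by
        constructor
        · intro y hy
          by_cases h : y = Order.succ m.1.1
          · subst h; rw [hbx]; exact hs'2
          · have hy' : y ≤ m.1.1 := by
              rw [← Order.lt_succ_iff_of_not_isMax hnmax]
              exact lt_of_le_of_ne hy h
            rw [hble y hy']
            exact m.2.1 y hy'
        · intro y z h hz
          by_cases hzx : z = Order.succ m.1.1
          · subst hzx
            by_cases hyx : y = Order.succ m.1.1
            · subst hyx
              rw [show homOfLE h = 𝟙 (Order.succ m.1.1) from rfl, F.map_id, Category.id_comp]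
            · have hy' : y ≤ m.1.1 := by
                rw [← Order.lt_succ_iff_of_not_isMax hnmax]
                exact lt_of_le_of_ne h hyx
              rw [hbx, hble y hy',
                show (homOfLE h : y ⟶ Order.succ m.1.1) =
                  homOfLE hy' ≫ homOfLE (Order.le_succ m.1.1) from rfl,
                F.map_comp, Category.assoc, hs'1]
              exact m.2.2 y m.1.1 hy' le_rfl
          · have hz' : z ≤ m.1.1 := by
              rw [← Order.lt_succ_iff_of_not_isMax hnmax]
              exact lt_of_le_of_ne hz hzx
            rw [hble z hz', hble y (h.trans hz')]
            exact m.2.2 y z h hz'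
      have hrel : rel m ⟨(Order.succ m.1.1, bfun), hb⟩ :=
        ⟨Order.le_succ _, fun y hy => hble y hy⟩
      have := (hm _ hrel).1
      exact absurd this (not_le.mpr hlt)
    refine ⟨m.1.2 ⊤, ?_⟩
    have hp := m.2.1 ⊤ hmtop.ge
    rw [hp, show (homOfLE (le_top : (⊤ : J) ≤ ⊤)) = 𝟙 (⊤ : J) from rfl, F.map_id]
  have spl := ShortComplex.Splitting.ofExactOfSection _ hSE.exact s hs hSE.mono_f
  exact ⟨spl.r, spl.f_r⟩
end

section
/- Given an adjoint triple (L, M, R) with L and R fully faithful (so the unit η : Id → ML and counit ε : MR → Id are invertible), the composite natural transformation L →(μL) RML →(Rη⁻¹) R equals the composite L →(Lε⁻¹) LMR →(λR) R, where λ is the counit of L ⊣ M and μ the unit of M ⊣ R. -/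
open CategoryTheory

/-- Given an adjoint triple `L ⊣ M ⊣ R` with `L` and `R` fully faithful (so that the
unit `η : 𝟭 D ⟶ L ⋙ M` of `L ⊣ M` and the counit `ε : R ⋙ M ⟶ 𝟭 D` of `M ⊣ R`
are invertible), the composite `L ⟶(μL) RML ⟶(Rη⁻¹) R` equals the composite
`L ⟶(Lε⁻¹) LMR ⟶(λR) R`, where `λ` is the counit of `L ⊣ M` and `μ` the unit of
`M ⊣ R`. -/
theorem jump_over_middle_adjoint
    {C D : Type*} [Category C] [Category D]
    (L : D ⥤ C) (M : C ⥤ D) (R : D ⥤ C)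
    (adj₁ : L ⊣ M) (adj₂ : M ⊣ R)
    [L.Full] [L.Faithful] [R.Full] [R.Faithful] :
    ∀ Y : D,
      adj₂.unit.app (L.obj Y) ≫ R.map ((asIso adj₁.unit).inv.app Y) =
        L.map ((asIso adj₂.counit).inv.app Y) ≫ adj₁.counit.app (R.obj Y) 

:= by
  intro Y
  apply (adj₂.homEquiv _ _).symm.injective
  simp only [Adjunction.homEquiv_counit, Functor.map_comp, Category.assoc, Functor.id_obj]
  have nat2 : M.map (R.map ((asIso adj₁.unit).inv.app Y)) ≫ adj₂.counit.app Y =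
      adj₂.counit.app (M.obj (L.obj Y)) ≫ (asIso adj₁.unit).inv.app Y :=
    adj₂.counit.naturality _
  rw [nat2, adj₂.left_triangle_components_assoc]
  have nat1 : M.map (L.map ((asIso adj₂.counit).inv.app Y)) =
      (asIso adj₁.unit).inv.app Y ≫ (asIso adj₂.counit).inv.app Y ≫
        adj₁.unit.app (M.obj (R.obj Y)) := by
    have := adj₁.unit.naturality ((asIso adj₂.counit).inv.app Y)
    simp only [Functor.id_map, Functor.id_obj, Functor.comp_obj] at this
    rw [← Functor.comp_map, this]
    simp
  rw [nat1]
  simp [adj₁.right_triangle_components]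
end

section
/- Let k be a field, C a k-linear inverse category with degree function deg : Obj(C) → λ, and X : C → Vect_k a k-linear functor. Then X admits a transfinite filtration 0 = X_{<0} ⊆ X_{<1} ⊆ ⋯ ⊆ X_{<λ} = X by subfunctors, continuous at limit ordinals, such that for each α < λ the quotient X_{<α+1}/X_{<α} is isomorphic to the direct sum over objects d of degree α of (dim X(d)) copies of the simple functor S_d. -/
open CategoryTheory

/-- Let `C` be a `k`-linear inverse category with degree function
`deg : Obj(C) → λ` (so `End(c) ≅ k` and every nonzero non-endomorphism strictly
lowers the degree) and let `X : C ⥤ Vect_k` be a `k`-linear functor.  Then `X`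
admits a transfinite filtration `0 = X_{<0} ⊆ X_{<1} ⊆ ⋯ ⊆ X_{<λ} = X` by
subfunctors (given by a family `N α d ≤ X(d)` of subspaces stable under the action
of `C`), continuous at limit ordinals, such that for every `α < λ` the quotient
`X_{<α+1}/X_{<α}` is the direct sum, over objects `d` of degree `α`, of
`dim X(d)` copies of the simple functor `S_d`; concretely: the subquotient at the
step `α` is supported exactly on the objects `d` of degree `α`, where its full
fibre is `X(d)` (i.e. `N α d = ⊥` and `N (α+1) d = ⊤` when `deg d = α`, and
`N (α+1) d = N α d` otherwise). -/
theorem inverse_category_filtration_by_simples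
    (k : Type*) [Field k] (C : Type*) [SmallCategory C] [Preadditive C] [Linear k C]
    (deg : C → Ordinal) (lam : Ordinal) (hdeg : ∀ c : C, deg c < lam)
    -- `C` is an inverse category:
    (hend : ∀ (c : C) (f : c ⟶ c), ∃ a : k, f = a • 𝟙 c)
    (hone : ∀ c : C, (𝟙 c) ≠ 0)
    (hinv : ∀ ⦃c d : C⦄ (f : c ⟶ d), c ≠ d → f ≠ 0 → deg d < deg c)
    -- a `k`-linear functor `X : C ⥤ Vect_k`:
    (X : C ⥤ ModuleCat k) [X.Additive] [Functor.Linear k X] :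
    ∃ N : Ordinal → ∀ d : C, Submodule k (X.obj d),
      -- each `N α` is a subfunctor of `X`:
      (∀ (α : Ordinal) ⦃d e : C⦄ (f : d ⟶ e) (x : X.obj d),
        x ∈ N α d → X.map f x ∈ N α e) ∧
      -- the filtration is increasing, starts at `0` and ends at `X`:
      (∀ α β : Ordinal, α ≤ β → ∀ d, N α d ≤ N β d) ∧
      (∀ d, N 0 d = ⊥) ∧ (∀ d, N lam d = ⊤) ∧
      -- continuity at limit ordinals:
      (∀ β : Ordinal, Order.IsSuccLimit β → ∀ d, N β d = ⨆ (α : Ordinal) (_ : α < β), N α d) ∧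
      -- the successive quotients are sums of simple functors of the corresponding
      -- degree, with multiplicity `dim X(d)`:
      (∀ (α : Ordinal) (d : C), α < lam →
        (deg d = α → N α d = ⊥ ∧ N (α + 1) d = ⊤) ∧
        (deg d ≠ α → N (α + 1) d = N α d)) := by
  refine ⟨fun α d => if deg d < α then ⊤ else ⊥, ?_, ?_, ?_, ?_, ?_, ?_⟩
  · intro α d e f x hx
    by_cases hd : deg d < α
    · by_cases hde : d = e
      · subst hde
        simp only [hd, if_pos]
        trivial
      · by_cases hf : f = 0
        · subst hf
          simp only [Functor.map_zero, Limits.zero_app]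
          exact zero_mem _
        · have : deg e < α := lt_trans (hinv f hde hf) hd
          simp only [this, if_pos]
          trivial
    · simp only [hd, if_neg, Submodule.mem_bot] at hx
      rw [hx]
      simp only [map_zero]
      exact zero_mem _
  · intro α β hab d
    by_cases hd : deg d < α
    · have : deg d < β := lt_of_lt_of_le hd hab
      simp [hd, this]
    · simp [hd]
  · intro d
    simp [not_lt_of_ge (zero_le (a := deg d))]
  · intro d
    simp [hdeg d]
  · intro β hβ d
    by_cases hd : deg d < β
    · have h1 : deg d + 1 < β := hβ.succ_lt hd
      have : (⨆ (α : Ordinal) (_ : α < β), if deg d < α then (⊤ : Submodule k (X.obj d)) else ⊥) = ⊤ := by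
        apply top_unique
        refine le_trans ?_ (le_iSup _ (deg d + 1))
        refine le_trans ?_ (le_iSup _ h1)
        simp [Order.lt_succ_iff_of_not_isMax]
      simp [hd, this]
    · have : (⨆ (α : Ordinal) (_ : α < β), if deg d < α then (⊤ : Submodule k (X.obj d)) else ⊥) = ⊥ := by
        apply le_antisymm _ bot_le
        refine iSup_le fun α => iSup_le fun hα => ?_
        have : ¬ deg d < α := fun h => hd (lt_trans h hα)
        simp [this]
      simp [hd, this]
  · intro α d _
    constructor
    · intro h
      refine ⟨if_neg (by simp [h]), ?_⟩
      have : deg d < α + 1 := by rw [h]; exact Order.lt_succ _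
      exact if_pos this
    · intro h
      by_cases hd : deg d < α
      · have : deg d < α + 1 := lt_trans hd (Order.lt_succ _)
        simp only [if_pos this, if_pos hd]
      · have : ¬ deg d < α + 1 := by
          intro hlt
          rcases (Order.lt_succ_iff_of_not_isMax (not_isMax α)).mp hlt |>.lt_or_eq with h1 | h1
          · exact hd h1
          · exact h h1
        simp only [if_neg this, if_neg hd]
end

section
/- Let A be a finite dimensional k-algebra which is Reedy with respect to a complete set of orthogonal idempotents {e_0, ..., e_n}, a degree function deg, and subalgebras A⁺, A⁻. Then the semisimple algebra A⁰ := A⁺ ∩ A⁻ equals ⊕_{i=0}^n k·e_i, and the multiplication map A⁺ ⊗_{A⁰} A⁻ → A is an isomorphism of k-vector spaces (triangular decomposition). -/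
open DirectSum TensorProduct

variable (k : Type*) [Field k]

section Defs

variable {A : Type*} [Ring A] [Algebra k A]

/-- The `k`-linear "corner" map `z ↦ x * z * y`. -/
noncomputable def cornerMap (x y : A) : A →ₗ[k] A :=
  (LinearMap.mulLeft k x).comp (LinearMap.mulRight k y)

/-- The corner `x ⬝ N ⬝ y` of a `k`-submodule `N ≤ A`. -/
noncomputable def cornerSub (N : Submodule k A) (x y : A) : Submodule k A :=
  Submodule.map (cornerMap k x y) N

/-- Multiplication, as a `k`-linear map `N ⊗[k] N' →ₗ[k] A` on a pair of
submodules `N, N' ≤ A`. -/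
noncomputable def mulTensor (N N' : Submodule k A) : (N ⊗[k] N') →ₗ[k] A :=
  TensorProduct.lift
    { toFun := fun x =>
        { toFun := fun y => (x : A) * (y : A)
          map_add' := by intro a b; simp [mul_add]
          map_smul' := by intro a b; simp [mul_smul_comm] }
      map_add' := by intro a b; ext c; simp [add_mul]
      map_smul' := by intro a b; ext c; simp [smul_mul_assoc] }

/-- The multiplication map `⨁_l (N ⬝ e_l) ⊗[k] (e_l ⬝ N') →ₗ[k] A` for a family of
idempotents `e`. -/
noncomputable def triangularMulMap {n : ℕ} (e : Fin (n + 1) → A)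
    (N N' : Submodule k A) :
    (⨁ l : Fin (n + 1), (↥(cornerSub k N 1 (e l)) ⊗[k] ↥(cornerSub k N' (e l) 1)))
      →ₗ[k] A :=
  DirectSum.toModule k (Fin (n + 1)) A fun l =>
    mulTensor k (cornerSub k N 1 (e l)) (cornerSub k N' (e l) 1)

/-- The multiplication map `⨁_l (e_j ⬝ N ⬝ e_l) ⊗[k] (e_l ⬝ N' ⬝ e_i) →ₗ[k] A`. -/
noncomputable def cornerMulMap {n : ℕ} (e : Fin (n + 1) → A)
    (N N' : Submodule k A) (i j : Fin (n + 1)) :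
    (⨁ l : Fin (n + 1),
      (↥(cornerSub k N (e j) (e l)) ⊗[k] ↥(cornerSub k N' (e l) (e i)))) →ₗ[k] A :=
  DirectSum.toModule k (Fin (n + 1)) A fun l =>
    mulTensor k (cornerSub k N (e j) (e l)) (cornerSub k N' (e l) (e i))

end Defs

section Aux


variable {A : Type*} [Ring A] [Algebra k A]

@[simp] lemma cornerMap_apply (x y z : A) : cornerMap k x y z = x * (z * y) := rfl

lemma mem_cornerSub {N : Submodule k A} {x y z : A} :
    z ∈ cornerSub k N x y ↔ ∃ a ∈ N, x * (a * y) = z := by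
  simp [cornerSub, Submodule.mem_map]

@[simp] lemma mulTensor_tmul (N N' : Submodule k A) (x : N) (y : N') :
    mulTensor k N N' (x ⊗ₜ y) = (x : A) * (y : A) := rfl

lemma cornerSub_le_one_left (S : Subalgebra k A) {x : A} (y : A) (hx : x ∈ S) :
    cornerSub k (Subalgebra.toSubmodule S) x y ≤
      cornerSub k (Subalgebra.toSubmodule S) 1 y := by
  rintro z hz
  obtain ⟨a, ha, rfl⟩ := (mem_cornerSub k).mp hz
  exact (mem_cornerSub k).mpr ⟨x * a, S.mul_mem hx ha, by simp [mul_assoc]⟩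

lemma cornerSub_le_one_right (S : Subalgebra k A) (x : A) {y : A} (hy : y ∈ S) :
    cornerSub k (Subalgebra.toSubmodule S) x y ≤
      cornerSub k (Subalgebra.toSubmodule S) x 1 := by
  rintro z hz
  obtain ⟨a, ha, rfl⟩ := (mem_cornerSub k).mp hz
  exact (mem_cornerSub k).mpr ⟨a * y, S.mul_mem ha hy, by simp [mul_assoc]⟩

noncomputable def cutL (S : Subalgebra k A) (x y : A) :
    ↥(cornerSub k (Subalgebra.toSubmodule S) 1 y) →ₗ[k]
      ↥(cornerSub k (Subalgebra.toSubmodule S) x y) :=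
  LinearMap.codRestrict _ ((LinearMap.mulLeft k x).comp (Submodule.subtype _)) (by
    rintro ⟨z, hz⟩
    obtain ⟨a, ha, rfl⟩ := (mem_cornerSub k).mp hz
    exact (mem_cornerSub k).mpr ⟨a, ha, by simp⟩)

@[simp] lemma cutL_coe (S : Subalgebra k A) (x y : A)
    (z : ↥(cornerSub k (Subalgebra.toSubmodule S) 1 y)) :
    (cutL k S x y z : A) = x * (z : A) := rfl

noncomputable def cutR (S : Subalgebra k A) (x y : A) :
    ↥(cornerSub k (Subalgebra.toSubmodule S) x 1) →ₗ[k]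
      ↥(cornerSub k (Subalgebra.toSubmodule S) x y) :=
  LinearMap.codRestrict _ ((LinearMap.mulRight k y).comp (Submodule.subtype _)) (by
    rintro ⟨z, hz⟩
    obtain ⟨a, ha, rfl⟩ := (mem_cornerSub k).mp hz
    exact (mem_cornerSub k).mpr ⟨a, ha, by simp [mul_assoc]⟩)

@[simp] lemma cutR_coe (S : Subalgebra k A) (x y : A)
    (z : ↥(cornerSub k (Subalgebra.toSubmodule S) x 1)) :
    (cutR k S x y z : A) = (z : A) * y := rfl

variable {n : ℕ}

/-- Inclusion of the corner direct sum into the triangular direct sum. -/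
noncomputable def iotaMap (e : Fin (n + 1) → A) (Ap Am : Subalgebra k A)
    (heP : ∀ i, e i ∈ Ap) (heM : ∀ i, e i ∈ Am) (i j : Fin (n + 1)) :
    (⨁ l : Fin (n + 1),
      (↥(cornerSub k (Subalgebra.toSubmodule Ap) (e j) (e l)) ⊗[k]
        ↥(cornerSub k (Subalgebra.toSubmodule Am) (e l) (e i)))) →ₗ[k]
    (⨁ l : Fin (n + 1),
      (↥(cornerSub k (Subalgebra.toSubmodule Ap) 1 (e l)) ⊗[k]
        ↥(cornerSub k (Subalgebra.toSubmodule Am) (e l) 1))) :=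
  DirectSum.toModule k _ _ fun l =>
    (DirectSum.lof k _ _ l).comp
      (TensorProduct.map
        (Submodule.inclusion (cornerSub_le_one_left k Ap (e l) (heP j)))
        (Submodule.inclusion (cornerSub_le_one_right k Am (e l) (heM i))))

/-- Projection from the triangular direct sum onto the corner direct sum. -/
noncomputable def phiMap (e : Fin (n + 1) → A) (Ap Am : Subalgebra k A)
    (i j : Fin (n + 1)) :
    (⨁ l : Fin (n + 1),
      (↥(cornerSub k (Subalgebra.toSubmodule Ap) 1 (e l)) ⊗[k]
        ↥(cornerSub k (Subalgebra.toSubmodule Am) (e l) 1))) →ₗ[k]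
    (⨁ l : Fin (n + 1),
      (↥(cornerSub k (Subalgebra.toSubmodule Ap) (e j) (e l)) ⊗[k]
        ↥(cornerSub k (Subalgebra.toSubmodule Am) (e l) (e i)))) :=
  DirectSum.toModule k _ _ fun l =>
    (DirectSum.lof k _ _ l).comp
      (TensorProduct.map (cutL k Ap (e j) (e l)) (cutR k Am (e l) (e i)))

variable (e : Fin (n + 1) → A) (Ap Am : Subalgebra k A)
  (heP : ∀ i, e i ∈ Ap) (heM : ∀ i, e i ∈ Am)

lemma triangular_comp_iota (i j : Fin (n + 1)) :
    (triangularMulMap k e (Subalgebra.toSubmodule Ap)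
        (Subalgebra.toSubmodule Am)).comp (iotaMap k e Ap Am heP heM i j) =
      cornerMulMap k e (Subalgebra.toSubmodule Ap) (Subalgebra.toSubmodule Am) i j := by
  refine DirectSum.linearMap_ext _ fun l => ?_
  refine TensorProduct.ext' fun x y => ?_
  simp [iotaMap, triangularMulMap, cornerMulMap]

lemma corner_comp_triangular (i j : Fin (n + 1)) :
    (cornerMap k (e j) (e i)).comp
        (triangularMulMap k e (Subalgebra.toSubmodule Ap) (Subalgebra.toSubmodule Am)) =
      (cornerMulMap k e (Subalgebra.toSubmodule Ap)
        (Subalgebra.toSubmodule Am) i j).comp (phiMap k e Ap Am i j) := by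
  refine DirectSum.linearMap_ext _ fun l => ?_
  refine TensorProduct.ext' fun x y => ?_
  simp [phiMap, triangularMulMap, cornerMulMap, mul_assoc]

lemma sum_iota_phi (hc : ∑ l, e l = 1) :
    ∑ i, ∑ j, (iotaMap k e Ap Am heP heM i j).comp (phiMap k e Ap Am i j) =
      LinearMap.id := by
  refine DirectSum.linearMap_ext _ fun l => ?_
  refine TensorProduct.ext' fun x y => ?_
  simp only [LinearMap.coe_sum, LinearMap.comp_apply, Finset.sum_apply,
    LinearMap.id_comp, LinearMap.id_apply]
  simp only [phiMap, iotaMap, DirectSum.toModule_lof, LinearMap.comp_apply,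
    TensorProduct.map_tmul]
  simp_rw [← map_sum]
  congr 1
  rw [Finset.sum_comm]
  have : ∀ j, ∑ i, (Submodule.inclusion (cornerSub_le_one_left k Ap (e l) (heP j)))
        (cutL k Ap (e j) (e l) x) ⊗ₜ[k]
      (Submodule.inclusion (cornerSub_le_one_right k Am (e l) (heM i)))
        (cutR k Am (e l) (e i) y) =
      (Submodule.inclusion (cornerSub_le_one_left k Ap (e l) (heP j)))
        (cutL k Ap (e j) (e l) x) ⊗ₜ[k] y := by
    intro j
    rw [← TensorProduct.tmul_sum]
    congr 1
    ext
    push_cast [Submodule.coe_inclusion, cutR_coe]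
    rw [← Finset.mul_sum, hc, mul_one]
  rw [Finset.sum_congr rfl fun j _ => this j, ← TensorProduct.sum_tmul]
  congr 1
  ext
  push_cast [Submodule.coe_inclusion, cutL_coe]
  rw [← Finset.sum_mul, hc, one_mul]

lemma sum_cornerMap (hc : ∑ l, e l = 1) :
    ∑ i, ∑ j, cornerMap k (e j) (e i) = (LinearMap.id : A →ₗ[k] A) := by
  ext z
  simp only [LinearMap.coe_sum, Finset.sum_apply, cornerMap_apply, LinearMap.id_apply]
  rw [Finset.sum_comm]
  simp_rw [← Finset.mul_sum, hc, mul_one, ← Finset.sum_mul, hc, one_mul]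

end Aux

/-- Let `A` be a finite dimensional `k`-algebra which is *Reedy* with respect to a
complete set of orthogonal idempotents `e_0, ..., e_n`, a degree function `deg`, and
subalgebras `A⁺`, `A⁻` (so the corners `e_i A⁺ e_i` and `e_i A⁻ e_i` are spanned by
`e_i`, nonzero corners `e_j A⁺ e_i` (resp. `e_j A⁻ e_i`), `i ≠ j`, force
`deg j > deg i` (resp. `deg j < deg i`), and multiplication induces isomorphisms
`⨁_l e_j A⁺ e_l ⊗[k] e_l A⁻ e_i ≅ e_j A e_i`).  Then the semisimple subalgebra
`A⁰ := A⁺ ∩ A⁻` equals `⨁_i k·e_i`, and the multiplication map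
`A⁺ ⊗_{A⁰} A⁻ → A` is an isomorphism of `k`-vector spaces; since
`A⁰ = ∏_i k·e_i`, the latter tensor product is `⨁_l (A⁺ e_l) ⊗[k] (e_l A⁻)`, and we
express the triangular decomposition as bijectivity of the multiplication map on it. -/
theorem reedy_algebra_triangular_decomposition
    {A : Type*} [Ring A] [Algebra k A] [FiniteDimensional k A]
    {n : ℕ} (e : Fin (n + 1) → A)
    (he : CompleteOrthogonalIdempotents e) (hne : ∀ i, e i ≠ 0)
    (deg : Fin (n + 1) → ℕ)
    (Ap Am : Subalgebra k A)
    (heP : ∀ i, e i ∈ Ap) (heM : ∀ i, e i ∈ Am)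
    -- `e_i A⁺ e_i ≅ k`
    (hPcorner : ∀ (i) (x : A), x ∈ Ap → ∃ a : k, e i * x * e i = a • e i)
    -- `e_j A⁺ e_i ≠ 0` (for `i ≠ j`) implies `deg j > deg i`
    (hPdeg : ∀ i j, i ≠ j →
      cornerSub k (Subalgebra.toSubmodule Ap) (e j) (e i) ≠ ⊥ → deg i < deg j)
    -- `e_i A⁻ e_i ≅ k`
    (hMcorner : ∀ (i) (x : A), x ∈ Am → ∃ a : k, e i * x * e i = a • e i)
    -- `e_j A⁻ e_i ≠ 0` (for `i ≠ j`) implies `deg j < deg i`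
    (hMdeg : ∀ i j, i ≠ j →
      cornerSub k (Subalgebra.toSubmodule Am) (e j) (e i) ≠ ⊥ → deg j < deg i)
    -- multiplication induces isomorphisms `⨁_l e_j A⁺ e_l ⊗[k] e_l A⁻ e_i ≅ e_j A e_i`
    (hfac : ∀ i j,
      Function.Injective
        (cornerMulMap k e (Subalgebra.toSubmodule Ap) (Subalgebra.toSubmodule Am) i j) ∧
      LinearMap.range
        (cornerMulMap k e (Subalgebra.toSubmodule Ap) (Subalgebra.toSubmodule Am) i j) =
        cornerSub k (⊤ : Submodule k A) (e j) (e i)) :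
    -- `A⁰ := A⁺ ∩ A⁻ = ⨁_i k·e_i` ...
    Subalgebra.toSubmodule Ap ⊓ Subalgebra.toSubmodule Am =
      Submodule.span k (Set.range e) ∧
    -- ... and multiplication `A⁺ ⊗_{A⁰} A⁻ = ⨁_l (A⁺ e_l) ⊗[k] (e_l A⁻) → A`
    -- is an isomorphism of `k`-vector spaces
    Function.Bijective
      (triangularMulMap k e (Subalgebra.toSubmodule Ap) (Subalgebra.toSubmodule Am)) := by
  constructor
  · -- `A⁺ ∩ A⁻ = span of the idempotents`
    apply le_antisymm
    · intro x hx
      obtain ⟨hxP, hxM⟩ := hx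
      have hx : x = ∑ j, ∑ i, e j * (x * e i) := by
        calc x = (∑ j, e j) * (x * ∑ i, e i) := by rw [he.complete]; simp
        _ = ∑ j, e j * (x * ∑ i, e i) := by rw [Finset.sum_mul]
        _ = ∑ j, ∑ i, e j * (x * e i) := by
            refine Finset.sum_congr rfl fun j _ => ?_
            rw [Finset.mul_sum, Finset.mul_sum]
      rw [hx]
      refine Submodule.sum_mem _ fun j _ => Submodule.sum_mem _ fun i _ => ?_
      by_cases hij : i = j
      · subst hij
        obtain ⟨a, ha⟩ := hPcorner i x hxP
        rw [← mul_assoc, ha]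
        exact Submodule.smul_mem _ a (Submodule.subset_span ⟨i, rfl⟩)
      · have hz : e j * (x * e i) = 0 := by
          by_contra hzero
          have h1 : cornerSub k (Subalgebra.toSubmodule Ap) (e j) (e i) ≠ ⊥ :=
            Submodule.ne_bot_iff _ |>.mpr
              ⟨e j * (x * e i), (mem_cornerSub k).mpr ⟨x, hxP, rfl⟩, hzero⟩
          have h2 : cornerSub k (Subalgebra.toSubmodule Am) (e j) (e i) ≠ ⊥ :=
            Submodule.ne_bot_iff _ |>.mpr
              ⟨e j * (x * e i), (mem_cornerSub k).mpr ⟨x, hxM, rfl⟩, hzero⟩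
          exact lt_asymm (hPdeg i j hij h1) (hMdeg i j hij h2)
        rw [hz]
        exact Submodule.zero_mem _
    · rw [Submodule.span_le]
      rintro _ ⟨i, rfl⟩
      exact ⟨heP i, heM i⟩
  · constructor
    · -- injectivity
      intro x y hxy
      have hphi : ∀ i j, phiMap k e Ap Am i j x = phiMap k e Ap Am i j y := by
        intro i j
        refine (hfac i j).1 ?_
        have h1 := LinearMap.congr_fun (corner_comp_triangular k e Ap Am i j) x
        have h2 := LinearMap.congr_fun (corner_comp_triangular k e Ap Am i j) y
        simp only [LinearMap.comp_apply] at h1 h2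
        rw [← h1, ← h2, hxy]
      have hs := sum_iota_phi k e Ap Am heP heM he.complete
      have hx := LinearMap.congr_fun hs x
      have hy := LinearMap.congr_fun hs y
      simp only [LinearMap.coe_sum, Finset.sum_apply, LinearMap.comp_apply,
        LinearMap.id_apply] at hx hy
      rw [← hx, ← hy]
      simp only [hphi]
    · -- surjectivity
      intro a
      have ha : a = ∑ i, ∑ j, cornerMap k (e j) (e i) a := by
        have := congrArg (fun f => f a) (sum_cornerMap k e he.complete)
        simpa using this.symm
      have hmem : a ∈ LinearMap.range (triangularMulMap k e
          (Subalgebra.toSubmodule Ap) (Subalgebra.toSubmodule Am)) := by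
        rw [ha]
        refine Submodule.sum_mem _ fun i _ => Submodule.sum_mem _ fun j _ => ?_
        have hcm : cornerMap k (e j) (e i) a ∈
            cornerSub k (⊤ : Submodule k A) (e j) (e i) :=
          (mem_cornerSub k).mpr ⟨a, trivial, rfl⟩
        rw [← (hfac i j).2] at hcm
        obtain ⟨y, hy⟩ := hcm
        refine ⟨iotaMap k e Ap Am heP heM i j y, ?_⟩
        rw [← LinearMap.comp_apply, triangular_comp_iota, hy]
      obtain ⟨y, hy⟩ := hmem
      exact ⟨y, hy⟩
end

section
/- Let Q be a quiver with relations I over a field k, where I consists of k-linear combinations of paths of length at least two, and let kQ_I be the associated k-linear path category. Then kQ_I is a k-linear direct category (i.e. End ≅ k for each object and there exists an ordinal-valued degree function strictly increased by every nonzero non-endomorphism) if and only if Q is left rooted. -/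
open CategoryTheory

universe u

/-- The transfinite sequence of subsets of the vertex set of a quiver:
`V 0 = ∅`, `V (α+1) = {i | every arrow with target i has source in V α}`,
and `V α = ⋃_{β < α} V β` for limit ordinals `α`. -/
noncomputable def rootedSets (V : Type u) [Quiver.{u + 1} V] : Ordinal.{u} → Set V :=
  fun o =>
    Ordinal.limitRecOn o
      (∅ : Set V)
      (fun _ ih => {i : V | ∀ ⦃j : V⦄, (j ⟶ i) → j ∈ ih})
      (fun o _ ih => {i : V | ∃ (o' : Ordinal) (h : o' < o), i ∈ ih o' h})

/-- A quiver is left rooted if the transfinite sequence `V_α` exhausts the vertex set. -/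
def IsLeftRooted (V : Type u) [Quiver.{u + 1} V] : Prop :=
  ∃ lam : Ordinal.{u}, rootedSets V lam = Set.univ

/-- The evaluation of a path of the quiver in a category `C` equipped with a
realization `F` of the arrows: the empty path goes to the identity and concatenation
to composition. -/
def evalPath {V : Type u} [Quiver.{u + 1} V] {C : Type*} [Category C] (vObj : V → C)
    (F : ∀ ⦃i j : V⦄, (i ⟶ j) → (vObj i ⟶ vObj j)) :
    ∀ {i j : V}, Quiver.Path i j → (vObj i ⟶ vObj j)
  | _, _, Quiver.Path.nil => 𝟙 _
  | _, _, Quiver.Path.cons p a => evalPath vObj F p ≫ F a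

section Aux

variable {V : Type u} [Quiver.{u + 1} V]

lemma rootedSets_zero : rootedSets V 0 = ∅ := Ordinal.limitRecOn_zero _ _ _

@[simp] lemma evalPath_nil {C : Type*} [CategoryTheory.Category C] (vObj : V → C)
    (F : ∀ ⦃i j : V⦄, (i ⟶ j) → (vObj i ⟶ vObj j)) {i : V} :
    evalPath vObj F (Quiver.Path.nil : Quiver.Path i i) = 𝟙 (vObj i) := by
  simp [evalPath]

@[simp] lemma evalPath_cons {C : Type*} [CategoryTheory.Category C] (vObj : V → C)
    (F : ∀ ⦃i j : V⦄, (i ⟶ j) → (vObj i ⟶ vObj j)) {i j l : V}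
    (p : Quiver.Path i j) (a : j ⟶ l) :
    evalPath vObj F (p.cons a) = evalPath vObj F p ≫ F a := by
  simp [evalPath]

lemma mem_rootedSets_succ {o : Ordinal} {i : V} :
    i ∈ rootedSets V (Order.succ o) ↔ ∀ ⦃j : V⦄, (j ⟶ i) → j ∈ rootedSets V o := by
  unfold rootedSets
  rw [Ordinal.limitRecOn_succ]
  rfl

lemma mem_rootedSets_limit {o : Ordinal} (ho : Order.IsSuccLimit o) {i : V} :
    i ∈ rootedSets V o ↔ ∃ o' : Ordinal, ∃ _ : o' < o, i ∈ rootedSets V o' := by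
  unfold rootedSets
  rw [Ordinal.limitRecOn_limit _ _ _ _ ho]
  rfl

lemma rootedSets_arrow_lt :
    ∀ (o : Ordinal) {i j : V}, i ∈ rootedSets V o → (j ⟶ i) →
      ∃ β : Ordinal, β < o ∧ j ∈ rootedSets V β := by
  intro o
  induction o using Ordinal.induction with
  | h o IH =>
    intro i j hi a
    rcases Ordinal.zero_or_succ_or_isSuccLimit o with rfl | ⟨γ, rfl⟩ | ho
    · simp [rootedSets_zero] at hi
    · exact ⟨γ, Order.lt_succ γ, mem_rootedSets_succ.1 hi a⟩
    · obtain ⟨o', ho', hio'⟩ := (mem_rootedSets_limit ho).1 hi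
      obtain ⟨β, hβ, hjβ⟩ := IH o' ho' hio' a
      exact ⟨β, hβ.trans ho', hjβ⟩

lemma rootedSets_mono : ∀ (β α : Ordinal), α ≤ β → rootedSets V α ⊆ rootedSets V β := by
  intro β
  induction β using Ordinal.induction with
  | h β IH =>
    intro α hαβ i hi
    rcases eq_or_lt_of_le hαβ with rfl | hlt
    · exact hi
    rcases Ordinal.zero_or_succ_or_isSuccLimit β with rfl | ⟨γ, rfl⟩ | hβ
    · exact absurd hlt (by simp : ¬ α < 0)
    · rw [mem_rootedSets_succ]
      intro j a
      obtain ⟨δ, hδ, hjδ⟩ := rootedSets_arrow_lt α hi a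
      exact IH γ (Order.lt_succ γ) δ (le_of_lt (hδ.trans_le (Order.lt_succ_iff.1 hlt))) hjδ
    · exact (mem_rootedSets_limit hβ).2 ⟨α, hlt, hi⟩

/-- The rank of a vertex: the least ordinal `α` with `i ∈ rootedSets V α`. -/
noncomputable def vertexRank (V : Type u) [Quiver.{u + 1} V] (i : V) : Ordinal.{u} :=
  sInf {α : Ordinal | i ∈ rootedSets V α}

lemma vertexRank_mem {i : V} (h : IsLeftRooted V) : i ∈ rootedSets V (vertexRank V i) := by
  obtain ⟨lam, hlam⟩ := h
  have hm : lam ∈ {α : Ordinal.{u} | i ∈ rootedSets V α} := by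
    simp only [Set.mem_setOf_eq, hlam]
    trivial
  exact csInf_mem ⟨lam, hm⟩

lemma vertexRank_lt_of_arrow (h : IsLeftRooted V) {i j : V} (a : j ⟶ i) :
    vertexRank V j < vertexRank V i := by
  obtain ⟨β, hβ, hjβ⟩ := rootedSets_arrow_lt (vertexRank V i) (vertexRank_mem h) a
  exact lt_of_le_of_lt (csInf_le' hjβ) hβ

lemma vertexRank_le_of_path (h : IsLeftRooted V) {i j : V} (p : Quiver.Path i j) :
    vertexRank V i ≤ vertexRank V j := by
  induction p with
  | nil => exact le_rfl
  | cons q a ih => exact ih.trans (le_of_lt (vertexRank_lt_of_arrow h a))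

lemma path_eq_nil_of_leftRooted (h : IsLeftRooted V) {i : V} (p : Quiver.Path i i) :
    p = Quiver.Path.nil := by
  cases p with
  | nil => rfl
  | cons q a =>
    exact absurd (lt_of_le_of_lt (vertexRank_le_of_path h q) (vertexRank_lt_of_arrow h a))
      (lt_irrefl _)

end Aux

/-- Let `(Q, I)` be a quiver with relations over a field `k`, with all relations
`k`-linear combinations of paths of length at least two, and let `C = kQ_I` be the
associated `k`-linear path category.  We model `C` abstractly: a `k`-linear category
whose objects are identified with the vertices of `Q` via `vObj`, in which
- the Hom-spaces are spanned by (the evaluations of) the paths of `Q`, and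
- the evaluations of the paths of length `≤ 1` are linearly independent
  (this encodes that the defining relations only involve paths of length `≥ 2`).

Then `kQ_I` is a `k`-linear *direct* category — i.e. `End(c) ≅ k` for every object
`c` and there is an ordinal-valued degree function which is strictly increased by
every nonzero non-endomorphism — if and only if `Q` is left rooted. -/
theorem pathCategory_direct_iff_leftRooted
    (k : Type*) [Field k]
    (V : Type u) [Quiver.{u + 1} V]
    (C : Type*) [Category C] [Preadditive C] [Linear k C]
    (vObj : V ≃ C)
    (F : ∀ ⦃i j : V⦄, (i ⟶ j) → (vObj i ⟶ vObj j))
    -- the Hom-spaces of `kQ_I` are spanned by the paths of `Q`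
    (hspan : ∀ i j : V,
      Submodule.span k (Set.range fun p : Quiver.Path i j => evalPath vObj F p) = ⊤)
    -- the relations are combinations of paths of length at least two: the classes of
    -- the paths of length `≤ 1` remain linearly independent in `kQ_I`
    (hindep : ∀ i j : V,
      LinearIndependent k
        (fun p : {p : Quiver.Path i j // p.length ≤ 1} => evalPath vObj F p.1)) :
    ((∀ (c : C) (f : c ⟶ c), ∃ a : k, f = a • 𝟙 c) ∧ (∀ c : C, (𝟙 c) ≠ 0) ∧
      ∃ deg : C → Ordinal.{u}, ∀ ⦃c d : C⦄ (f : c ⟶ d), c ≠ d → f ≠ 0 → deg c < deg d)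
      ↔ IsLeftRooted V := by
  constructor
  · rintro ⟨hEnd, hId, deg, hdeg⟩
    -- no loops
    have hnoloop : ∀ {i : V}, (i ⟶ i) → False := by
      intro i a
      classical
      obtain ⟨α, hα⟩ := hEnd (vObj i) (F a)
      let P := {p : Quiver.Path i i // p.length ≤ 1}
      let p0 : P := ⟨Quiver.Path.nil, by simp⟩
      let p1 : P := ⟨Quiver.Path.cons Quiver.Path.nil a, by simp⟩
      have h01 : p0 ≠ p1 := by
        intro h
        simpa [p0, p1] using congrArg Quiver.Path.length (congrArg Subtype.val h)
      have hli := linearIndependent_iff'.1 (hindep i i) ({p0, p1} : Finset P)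
        (fun p : P => if p = p0 then α else -1)
      have hsum : (∑ p ∈ ({p0, p1} : Finset P),
          (if p = p0 then α else -1) • evalPath vObj F p.1) = 0 := by
        rw [Finset.sum_pair h01, if_pos rfl, if_neg (Ne.symm h01)]
        show α • evalPath vObj F (Quiver.Path.nil : Quiver.Path i i) +
          (-1 : k) • evalPath vObj F (Quiver.Path.cons Quiver.Path.nil a) = 0
        simp [hα]
      have hz := hli hsum p1 (by simp)
      rw [if_neg (Ne.symm h01)] at hz
      exact absurd hz (by norm_num)
    -- arrows evaluate to nonzero morphisms
    have hFne : ∀ {i j : V} (a : j ⟶ i), F a ≠ 0 := by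
      intro i j a
      have := (hindep j i).ne_zero ⟨Quiver.Path.cons Quiver.Path.nil a, by simp⟩
      simpa using this
    -- degree strictly increases along arrows
    have harrow : ∀ {i j : V}, (j ⟶ i) → deg (vObj j) < deg (vObj i) := by
      intro i j a
      have hji : j ≠ i := fun h => hnoloop (h ▸ a)
      exact hdeg (F a) (fun h => hji (vObj.injective h)) (hFne a)
    -- transfinite exhaustion
    have claim : ∀ (o : Ordinal) (i : V), deg (vObj i) ≤ o →
        i ∈ rootedSets V (Order.succ o) := by
      intro o
      induction o using Ordinal.induction with
      | h o IH =>
        intro i hio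
        rw [mem_rootedSets_succ]
        intro j a
        have hj : deg (vObj j) < o := lt_of_lt_of_le (harrow a) hio
        exact rootedSets_mono o (Order.succ (deg (vObj j))) (Order.succ_le_of_lt hj)
          (IH (deg (vObj j)) hj j le_rfl)
    refine ⟨Order.succ (⨆ i : V, deg (vObj i)), ?_⟩
    ext i
    simp only [Set.mem_univ, iff_true]
    exact claim _ i (Ordinal.le_iSup (fun i : V => deg (vObj i)) i)
  · intro h
    refine ⟨?_, ?_, ?_⟩
    · intro c f
      obtain ⟨i, rfl⟩ := vObj.surjective c
      have hrange : (Set.range fun p : Quiver.Path i i => evalPath vObj F p) =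
          {𝟙 (vObj i)} := by
        ext x
        constructor
        · rintro ⟨p, rfl⟩
          rw [path_eq_nil_of_leftRooted h p]
          simp
        · rintro rfl
          exact ⟨Quiver.Path.nil, by simp⟩
      have hf : f ∈ Submodule.span k {𝟙 (vObj i)} := by
        rw [← hrange, hspan i i]; trivial
      obtain ⟨a, ha⟩ := Submodule.mem_span_singleton.1 hf
      exact ⟨a, ha.symm⟩
    · intro c
      obtain ⟨i, rfl⟩ := vObj.surjective c
      simpa using (hindep i i).ne_zero ⟨Quiver.Path.nil, by simp⟩
    · refine ⟨fun c => vertexRank V (vObj.symm c), ?_⟩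
      intro c d f hcd hf
      obtain ⟨i, rfl⟩ := vObj.surjective c
      obtain ⟨j, rfl⟩ := vObj.surjective d
      simp only [Equiv.symm_apply_apply]
      have hne : Nonempty (Quiver.Path i j) := by
        by_contra hempty
        have : IsEmpty (Quiver.Path i j) := not_nonempty_iff.1 hempty
        have hsp := hspan i j
        rw [Set.range_eq_empty, Submodule.span_empty] at hsp
        have : f ∈ (⊥ : Submodule k (vObj i ⟶ vObj j)) := by rw [hsp]; trivial
        exact hf (Submodule.mem_bot k |>.1 this)
      obtain ⟨p⟩ := hne
      cases p with
      | nil => exact absurd rfl hcd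
      | cons q a =>
        exact lt_of_le_of_lt (vertexRank_le_of_path h q) (vertexRank_lt_of_arrow h a)
end
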